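/- arXiv:1711.11066 — 2 statements merged into one kernel-verified Lean document; each statement's English description precedes it below -/
import Mathlib

section
/- Let C be a classifier satisfying ε-fair treatment and ε-predictive parity with respect to a context P with k = |Ψ_P| classes. Then either P satisfies 4(k−1)ε-approximately equal base rates (for all groups X,Y and classes i, μ(Pr[f(σ_X)=i], Pr[f(σ_Y)=i]) ≤ 4(k−1)ε), or C satisfies subgroup perfect prediction over P (there is a proper nonempty subset ψ ⊂ Ψ_P such that {C(O(σ)) | f(σ) ∈ ψ} and {C(O(σ)) | f(σ) ∉ ψ} have disjoint support). -/
open scoped Classical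
open Finset

/-- Multiplicative distance between nonnegative reals, valued in `ℝ≥0∞`. -/
noncomputable def mdist (x y : ℝ) : ENNReal :=
  if x = 0 ∧ y = 0 then 0
  else if 0 < x ∧ 0 < y then ENNReal.ofReal (Real.log (max (x / y) (y / x)))
  else ⊤

/-- Probability of an event `E` under a finitely supported distribution `D`. -/
noncomputable def pr {S : Type} [Fintype S] (D : S → ℝ) (E : S → Prop) : ℝ :=
  ∑ σ, if E σ then D σ else 0

/-- Conditional probability `Pr[A | B]`, with the convention that it is `0`
when `Pr[B] = 0` (division by zero). -/
noncomputable def cpr {S : Type} [Fintype S] (D : S → ℝ) (A B : S → Prop) : ℝ :=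
  pr D (fun σ => A σ ∧ B σ) / pr D B

/-- `D` is a probability mass function. -/
def IsProb {S : Type} [Fintype S] (D : S → ℝ) : Prop :=
  (∀ σ, 0 ≤ D σ) ∧ ∑ σ, D σ = 1

/-- `ε`-fair treatment: conditioned on each class, the classifier's outcome
distribution is `ε`-close (multiplicatively) between any two groups. -/
def FairTreatment {S Ψ G Θ Ω : Type} [Fintype S] (D : S → ℝ) (f : S → Ψ) (g : S → G)
    (O : S → Θ) (C : Θ → Ω) (ε : ℝ) : Prop :=
  ∀ (X Y : G) (c : Ψ) (o : Ω),
    mdist (cpr D (fun σ => C (O σ) = o) (fun σ => f σ = c ∧ g σ = X))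
          (cpr D (fun σ => C (O σ) = o) (fun σ => f σ = c ∧ g σ = Y)) ≤ ENNReal.ofReal ε

/-- `ε`-predictive parity: conditioned on each outcome, the class distribution
is `ε`-close (multiplicatively) between any two groups. -/
def PredParity {S Ψ G Θ Ω : Type} [Fintype S] (D : S → ℝ) (f : S → Ψ) (g : S → G)
    (O : S → Θ) (C : Θ → Ω) (ε : ℝ) : Prop :=
  ∀ (X Y : G) (o : Ω) (c : Ψ),
    mdist (cpr D (fun σ => f σ = c) (fun σ => C (O σ) = o ∧ g σ = X))
          (cpr D (fun σ => f σ = c) (fun σ => C (O σ) = o ∧ g σ = Y)) ≤ ENNReal.ofReal ε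

/-- Classes `i` and `j` are ambiguous w.r.t. classifier `C`: some outcome arises
with positive probability together with each of the two classes. -/
def Ambiguous {S Ψ Θ Ω : Type} [Fintype S] (D : S → ℝ) (f : S → Ψ)
    (O : S → Θ) (C : Θ → Ω) (i j : Ψ) : Prop :=
  ∃ o : Ω, 0 < pr D (fun σ => f σ = i ∧ C (O σ) = o) ∧
           0 < pr D (fun σ => f σ = j ∧ C (O σ) = o)

/-- Subgroup perfect prediction: there is a proper nonempty subset `ψ` of classes
such that the outcome distributions conditioned on `ψ` and on its complement
have disjoint supports. -/
def SubgroupPP {S Ψ Θ Ω : Type} [Fintype S] (D : S → ℝ) (f : S → Ψ)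
    (O : S → Θ) (C : Θ → Ω) : Prop :=
  ∃ ψ : Set Ψ, ψ.Nonempty ∧ ψ ≠ Set.univ ∧
    ∀ o : Ω, ¬ (0 < pr D (fun σ => f σ ∈ ψ ∧ C (O σ) = o) ∧
                0 < pr D (fun σ => f σ ∉ ψ ∧ C (O σ) = o))

section basics
variable {S : Type} [Fintype S] {D : S → ℝ} {E E' : S → Prop} {A B : S → Prop}

lemma pr_nonneg (hD0 : ∀ σ, 0 ≤ D σ) : 0 ≤ pr D E := by
  apply Finset.sum_nonneg; intro σ _; split
  · exact hD0 σ
  · exact le_rfl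

lemma pr_mono (hD0 : ∀ σ, 0 ≤ D σ) (h : ∀ σ, E σ → E' σ) : pr D E ≤ pr D E' := by
  apply Finset.sum_le_sum; intro σ _
  by_cases hE : E σ
  · simp [hE, h σ hE]
  · simp [hE]; split
    · exact hD0 σ
    · exact le_rfl

lemma le_pr (hD0 : ∀ σ, 0 ≤ D σ) (σ₀ : S) (h : E σ₀) : D σ₀ ≤ pr D E := by
  have := Finset.single_le_sum (f := fun σ => if E σ then D σ else 0)
    (fun σ _ => by by_cases hE : E σ <;> simp [hE, hD0 σ]) (Finset.mem_univ σ₀)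
  simpa [h, pr] using this

lemma pr_pos_elim (hD0 : ∀ σ, 0 ≤ D σ) (h : 0 < pr D E) : ∃ σ, 0 < D σ ∧ E σ := by
  by_contra hc
  push_neg at hc
  have hz : pr D E = 0 := by
    apply Finset.sum_eq_zero; intro σ _
    by_cases hE : E σ
    · simp only [hE, if_true]
      rcases lt_or_eq_of_le (hD0 σ) with h1 | h1
      · exact absurd hE (hc σ h1)
      · exact h1.symm
    · simp [hE]
  rw [hz] at h; exact lt_irrefl 0 h

lemma pr_congr (h : ∀ σ, E σ ↔ E' σ) : pr D E = pr D E' := by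
  apply Finset.sum_congr rfl; intro σ _; simp [h σ]

lemma cpr_nonneg (hD0 : ∀ σ, 0 ≤ D σ) : 0 ≤ cpr D A B :=
  div_nonneg (pr_nonneg hD0) (pr_nonneg hD0)

lemma cpr_pos_iff (hD0 : ∀ σ, 0 ≤ D σ) :
    0 < cpr D A B ↔ 0 < pr D (fun σ => A σ ∧ B σ) := by
  constructor
  · intro h
    rcases lt_or_eq_of_le (pr_nonneg (E := fun σ => A σ ∧ B σ) hD0) with h1 | h1
    · exact h1
    · exfalso; rw [cpr, ← h1, zero_div] at h; exact lt_irrefl 0 h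
  · intro h
    have hden : 0 < pr D B :=
      lt_of_lt_of_le h (pr_mono hD0 (fun σ hσ => hσ.2))
    exact div_pos h hden

lemma log_max_div (x y : ℝ) (hx : 0 < x) (hy : 0 < y) :
    Real.log (max (x / y) (y / x)) = |Real.log x - Real.log y| := by
  have h1 : Real.log (x / y) = Real.log x - Real.log y := Real.log_div hx.ne' hy.ne'
  have h2 : Real.log (y / x) = -(Real.log x - Real.log y) := by
    rw [Real.log_div hy.ne' hx.ne']; ring
  rcases le_total (x / y) (y / x) with h | h
  · have hle : Real.log (x / y) ≤ Real.log (y / x) := Real.log_le_log (div_pos hx hy) h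
    rw [max_eq_right h, h2, abs_of_nonpos (by rw [h1, h2] at hle; linarith)]
  · have hle : Real.log (y / x) ≤ Real.log (x / y) := Real.log_le_log (div_pos hy hx) h
    rw [max_eq_left h, h1, abs_of_nonneg (by rw [h1, h2] at hle; linarith)]

lemma mdist_le_elim {x y ε : ℝ} (hε : 0 ≤ ε) (hx : 0 < x) (hy : 0 < y)
    (h : mdist x y ≤ ENNReal.ofReal ε) : |Real.log x - Real.log y| ≤ ε := by
  rw [mdist, if_neg (by rintro ⟨h1, -⟩; exact hx.ne' h1), if_pos ⟨hx, hy⟩,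
    ENNReal.ofReal_le_ofReal_iff hε, log_max_div x y hx hy] at h
  exact h

lemma mdist_pos_trans {x y ε : ℝ} (hx : 0 < x) (hy : 0 ≤ y)
    (h : mdist x y ≤ ENNReal.ofReal ε) : 0 < y := by
  rcases lt_or_eq_of_le hy with h1 | h1
  · exact h1
  · exfalso
    rw [mdist, if_neg (by rintro ⟨h2, -⟩; exact hx.ne' h2),
      if_neg (by rintro ⟨-, h2⟩; exact h2.ne' h1.symm)] at h
    exact (ENNReal.ofReal_ne_top) (top_le_iff.mp h)

lemma mdist_le_intro {x y ε : ℝ} (hx : 0 < x) (hy : 0 < y)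
    (h : |Real.log x - Real.log y| ≤ ε) : mdist x y ≤ ENNReal.ofReal ε := by
  rw [mdist, if_neg (by rintro ⟨h1, -⟩; exact hx.ne' h1), if_pos ⟨hx, hy⟩,
    log_max_div x y hx hy]
  exact ENNReal.ofReal_le_ofReal h

end basics

section main
variable {S Ψ G Θ Ω : Type} [Fintype S]

lemma posAll (D : S → ℝ) (hD0 : ∀ σ, 0 ≤ D σ) (f : S → Ψ) (g : S → G)
    (O : S → Θ) (C : Θ → Ω) (ε : ℝ) (hpp : PredParity D f g O C ε) (c : Ψ) (o : Ω)
    (h : 0 < pr D (fun σ => f σ = c ∧ C (O σ) = o)) :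
    ∀ Z : G, 0 < pr D (fun σ => f σ = c ∧ C (O σ) = o ∧ g σ = Z) := by
  obtain ⟨σ₀, hσ₀, hfc, hCo⟩ := pr_pos_elim hD0 h
  have hX : 0 < cpr D (fun σ => f σ = c) (fun σ => C (O σ) = o ∧ g σ = g σ₀) := by
    rw [cpr_pos_iff hD0]
    exact lt_of_lt_of_le hσ₀ (le_pr hD0 σ₀ ⟨hfc, hCo, rfl⟩)
  intro Z
  have hZ := mdist_pos_trans hX (cpr_nonneg hD0) (hpp (g σ₀) Z o c)
  rw [cpr_pos_iff hD0] at hZ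
  exact hZ

lemma edge_bound (D : S → ℝ) (hD0 : ∀ σ, 0 ≤ D σ) (f : S → Ψ) (g : S → G)
    (O : S → Θ) (C : Θ → Ω) (ε : ℝ) (hε : 0 ≤ ε)
    (hft : FairTreatment D f g O C ε) (hpp : PredParity D f g O C ε)
    (i j : Ψ) (o : Ω)
    (hti : ∀ Z : G, 0 < pr D (fun σ => f σ = i ∧ C (O σ) = o ∧ g σ = Z))
    (htj : ∀ Z : G, 0 < pr D (fun σ => f σ = j ∧ C (O σ) = o ∧ g σ = Z))
    (X Y : G) :
    |(Real.log (cpr D (fun σ => f σ = i) (fun σ => g σ = X)) -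
      Real.log (cpr D (fun σ => f σ = i) (fun σ => g σ = Y))) -
     (Real.log (cpr D (fun σ => f σ = j) (fun σ => g σ = X)) -
      Real.log (cpr D (fun σ => f σ = j) (fun σ => g σ = Y)))| ≤ 4 * ε := by
  -- positivity of the p's and q's
  have hppos : ∀ (c : Ψ), (∀ Z : G, 0 < pr D (fun σ => f σ = c ∧ C (O σ) = o ∧ g σ = Z)) →
      ∀ Z : G, 0 < cpr D (fun σ => f σ = c) (fun σ => C (O σ) = o ∧ g σ = Z) := by
    intro c ht Z
    rw [cpr_pos_iff hD0]
    exact ht Z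
  have hqpos : ∀ (c : Ψ), (∀ Z : G, 0 < pr D (fun σ => f σ = c ∧ C (O σ) = o ∧ g σ = Z)) →
      ∀ Z : G, 0 < cpr D (fun σ => C (O σ) = o) (fun σ => f σ = c ∧ g σ = Z) := by
    intro c ht Z
    rw [cpr_pos_iff hD0,
      pr_congr (E' := fun σ => f σ = c ∧ C (O σ) = o ∧ g σ = Z) (fun σ => by tauto)]
    exact ht Z
  -- key log decomposition
  have key : ∀ (c : Ψ), (∀ Z : G, 0 < pr D (fun σ => f σ = c ∧ C (O σ) = o ∧ g σ = Z)) →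
      ∀ Z : G, Real.log (cpr D (fun σ => f σ = c) (fun σ => g σ = Z)) =
        Real.log (cpr D (fun σ => f σ = c) (fun σ => C (O σ) = o ∧ g σ = Z))
        + Real.log (pr D (fun σ => C (O σ) = o ∧ g σ = Z))
        - Real.log (cpr D (fun σ => C (O σ) = o) (fun σ => f σ = c ∧ g σ = Z))
        - Real.log (pr D (fun σ => g σ = Z)) := by
    intro c ht Z
    have htZ := ht Z
    have hA : 0 < pr D (fun σ => C (O σ) = o ∧ g σ = Z) :=
      lt_of_lt_of_le htZ (pr_mono hD0 (fun σ h => ⟨h.2.1, h.2.2⟩))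
    have hB : 0 < pr D (fun σ => f σ = c ∧ g σ = Z) :=
      lt_of_lt_of_le htZ (pr_mono hD0 (fun σ h => ⟨h.1, h.2.2⟩))
    have hG : 0 < pr D (fun σ => g σ = Z) :=
      lt_of_lt_of_le hB (pr_mono hD0 (fun σ h => h.2))
    have hb : cpr D (fun σ => f σ = c) (fun σ => g σ = Z) =
        pr D (fun σ => f σ = c ∧ g σ = Z) / pr D (fun σ => g σ = Z) := rfl
    have hp : cpr D (fun σ => f σ = c) (fun σ => C (O σ) = o ∧ g σ = Z) =
        pr D (fun σ => f σ = c ∧ C (O σ) = o ∧ g σ = Z) /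
          pr D (fun σ => C (O σ) = o ∧ g σ = Z) := rfl
    have hq : cpr D (fun σ => C (O σ) = o) (fun σ => f σ = c ∧ g σ = Z) =
        pr D (fun σ => f σ = c ∧ C (O σ) = o ∧ g σ = Z) /
          pr D (fun σ => f σ = c ∧ g σ = Z) := by
      rw [cpr, pr_congr (E' := fun σ => f σ = c ∧ C (O σ) = o ∧ g σ = Z) (fun σ => by tauto)]
    rw [hb, hp, hq, Real.log_div hB.ne' hG.ne', Real.log_div htZ.ne' hA.ne',
      Real.log_div htZ.ne' hB.ne']
    ring
  have h1 := mdist_le_elim hε (hppos i hti X) (hppos i hti Y) (hpp X Y o i)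
  have h2 := mdist_le_elim hε (hppos j htj X) (hppos j htj Y) (hpp X Y o j)
  have h3 := mdist_le_elim hε (hqpos i hti X) (hqpos i hti Y) (hft X Y i o)
  have h4 := mdist_le_elim hε (hqpos j htj X) (hqpos j htj Y) (hft X Y j o)
  rw [key i hti X, key i hti Y, key j htj X, key j htj Y]
  rw [abs_le] at h1 h2 h3 h4 ⊢
  constructor <;> [nlinarith [h1.1, h1.2, h2.1, h2.2, h3.1, h3.2, h4.1, h4.2];
    nlinarith [h1.1, h1.2, h2.1, h2.2, h3.1, h3.2, h4.1, h4.2]]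

end main
theorem equal_base_rates_or_subgroupPP {S Ψ G Θ Ω : Type} [Fintype S] [Fintype Ψ]
    (D : S → ℝ) (hD : IsProb D) (f : S → Ψ) (g : S → G) (O : S → Θ) (C : Θ → Ω)
    (ε : ℝ) (hε : 0 ≤ ε)
    (hft : FairTreatment D f g O C ε) (hpp : PredParity D f g O C ε) :
    (∀ (X Y : G) (i : Ψ),
        mdist (cpr D (fun σ => f σ = i) (fun σ => g σ = X))
              (cpr D (fun σ => f σ = i) (fun σ => g σ = Y))
          ≤ ENNReal.ofReal (4 * ((Fintype.card Ψ : ℝ) - 1) * ε))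
    ∨ SubgroupPP D f O C := by
  by_cases hspp : SubgroupPP D f O C
  · exact Or.inr hspp
  left
  obtain ⟨hD0, hD1⟩ := hD
  -- a positive-probability individual
  have hex : ∃ σ₀ : S, 0 < D σ₀ := by
    by_contra hc
    push_neg at hc
    have : ∑ σ : S, D σ = 0 :=
      Finset.sum_eq_zero (fun σ _ => le_antisymm (hc σ) (hD0 σ))
    rw [hD1] at this
    exact one_ne_zero this
  obtain ⟨σ₀, hσ₀⟩ := hex
  haveI : Nonempty Ψ := ⟨f σ₀⟩
  -- crossing property from ¬SubgroupPP
  have hcross : ∀ ψ : Set Ψ, ψ.Nonempty → ψ ≠ Set.univ →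
      ∃ o : Ω, 0 < pr D (fun σ => f σ ∈ ψ ∧ C (O σ) = o) ∧
               0 < pr D (fun σ => f σ ∉ ψ ∧ C (O σ) = o) := by
    intro ψ h1 h2
    by_contra hc
    exact hspp ⟨ψ, h1, h2, fun o ho => hc ⟨o, ho.1, ho.2⟩⟩
  -- all classes are active
  have hact : ∀ c : Ψ, 0 < pr D (fun σ => f σ = c) := by
    by_contra hc
    push_neg at hc
    obtain ⟨c₀, hc₀⟩ := hc
    set ψ : Set Ψ := {c | 0 < pr D (fun σ => f σ = c)} with hψ
    have hne : ψ.Nonempty := ⟨f σ₀, lt_of_lt_of_le hσ₀ (le_pr hD0 σ₀ rfl)⟩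
    have hproper : ψ ≠ Set.univ := by
      intro h
      exact absurd (h ▸ Set.mem_univ c₀ : c₀ ∈ ψ) (not_lt.mpr hc₀)
    obtain ⟨o, -, h2⟩ := hcross ψ hne hproper
    obtain ⟨σ, hσ, hfσ, -⟩ := pr_pos_elim hD0 h2
    exact hfσ (lt_of_lt_of_le hσ (le_pr hD0 σ rfl))
  -- positivity of all base-rate ingredients
  have hBpos : ∀ (c : Ψ) (Z : G), 0 < pr D (fun σ => f σ = c ∧ g σ = Z) := by
    intro c Z
    obtain ⟨σ₁, hσ₁, hfc⟩ := pr_pos_elim hD0 (hact c)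
    have h0 : 0 < pr D (fun σ => f σ = c ∧ C (O σ) = C (O σ₁)) :=
      lt_of_lt_of_le hσ₁ (le_pr hD0 σ₁ ⟨hfc, rfl⟩)
    exact lt_of_lt_of_le (posAll D hD0 f g O C ε hpp c (C (O σ₁)) h0 Z)
      (pr_mono hD0 (fun σ h => ⟨h.1, h.2.2⟩))
  have hGpos : ∀ Z : G, 0 < pr D (fun σ => g σ = Z) := fun Z =>
    lt_of_lt_of_le (hBpos (f σ₀) Z) (pr_mono hD0 (fun σ h => h.2))
  have hbpos : ∀ (c : Ψ) (Z : G), 0 < cpr D (fun σ => f σ = c) (fun σ => g σ = Z) := by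
    intro c Z
    rw [cpr_pos_iff hD0]
    exact hBpos c Z
  -- base rates sum to one
  have hsum : ∀ Z : G, ∑ c : Ψ, cpr D (fun σ => f σ = c) (fun σ => g σ = Z) = 1 := by
    intro Z
    have hpart : ∑ c : Ψ, pr D (fun σ => f σ = c ∧ g σ = Z) =
        pr D (fun σ => g σ = Z) := by
      simp only [pr]
      rw [Finset.sum_comm]
      apply Finset.sum_congr rfl
      intro σ _
      by_cases hg : g σ = Z <;> simp [hg]
    simp only [cpr]
    rw [← Finset.sum_div, hpart, div_self (hGpos Z).ne']
  intro X Y i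
  set k := Fintype.card Ψ with hk
  have hk1 : 1 ≤ k := Fintype.card_pos
  set L : Ψ → ℝ := fun c =>
    Real.log (cpr D (fun σ => f σ = c) (fun σ => g σ = X)) -
    Real.log (cpr D (fun σ => f σ = c) (fun σ => g σ = Y)) with hL
  -- edge bound
  have hedge : ∀ a b : Ψ, Ambiguous D f O C a b → |L a - L b| ≤ 4 * ε := by
    rintro a b ⟨o, ha, hb⟩
    exact edge_bound D hD0 f g O C ε hε hft hpp a b o
      (posAll D hD0 f g O C ε hpp a o ha) (posAll D hD0 f g O C ε hpp b o hb) X Y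
  -- reachable sets
  set R : ℕ → Finset Ψ := fun n => Nat.rec {i}
    (fun _ Rn => Rn ∪ Finset.univ.filter
      (fun c => ∃ m ∈ Rn, Ambiguous D f O C m c ∨ Ambiguous D f O C c m)) n with hRdef
  have hR0 : R 0 = {i} := rfl
  have hRs : ∀ n, R (n + 1) = R n ∪ Finset.univ.filter
      (fun c => ∃ m ∈ R n, Ambiguous D f O C m c ∨ Ambiguous D f O C c m) := fun n => rfl
  have hmono : ∀ n, R n ⊆ R (n + 1) := by
    intro n
    rw [hRs n]
    exact Finset.subset_union_left
  have hiR : ∀ n, i ∈ R n := by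
    intro n
    induction n with
    | zero => simp [hR0]
    | succ n ih => exact hmono n ih
  have hRb : ∀ n, ∀ c ∈ R n, |L i - L c| ≤ 4 * n * ε := by
    intro n
    induction n with
    | zero =>
      intro c hc
      rw [hR0, Finset.mem_singleton] at hc
      simp [hc]
    | succ n ih =>
      intro c hc
      rw [hRs n, Finset.mem_union] at hc
      rcases hc with hc | hc
      · calc |L i - L c| ≤ 4 * n * ε := ih c hc
          _ ≤ 4 * (n + 1 : ℕ) * ε := by
            apply mul_le_mul_of_nonneg_right _ hε
            push_cast; linarith
      · rw [Finset.mem_filter] at hc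
        obtain ⟨-, m, hm, hamb⟩ := hc
        have hmc : |L m - L c| ≤ 4 * ε := by
          rcases hamb with h | h
          · exact hedge m c h
          · rw [abs_sub_comm]; exact hedge c m h
        calc |L i - L c| ≤ |L i - L m| + |L m - L c| := abs_sub_le _ _ _
          _ ≤ 4 * n * ε + 4 * ε := add_le_add (ih m hm) hmc
          _ = 4 * (n + 1 : ℕ) * ε := by push_cast; ring
  -- growth
  have hgrow : ∀ n, R n = Finset.univ ∨ n + 1 ≤ (R n).card := by
    intro n
    induction n with
    | zero =>
      right
      rw [hR0, Finset.card_singleton]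
    | succ n ih =>
      rcases ih with h | h
      · left
        exact Finset.univ_subset_iff.mp (h ▸ hmono n)
      · by_cases hu : R n = Finset.univ
        · left
          exact Finset.univ_subset_iff.mp (hu ▸ hmono n)
        · right
          have hproper : (↑(R n) : Set Ψ) ≠ Set.univ := by
            intro hcoe
            apply hu
            apply Finset.coe_injective
            rw [hcoe, Finset.coe_univ]
          have hne : (↑(R n) : Set Ψ).Nonempty := ⟨i, Finset.mem_coe.mpr (hiR n)⟩
          obtain ⟨o, h1, h2⟩ := hcross (↑(R n)) hne hproper
          obtain ⟨σa, hσa, hfa, hCa⟩ := pr_pos_elim hD0 h1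
          obtain ⟨σb, hσb, hfb, hCb⟩ := pr_pos_elim hD0 h2
          have hamb : Ambiguous D f O C (f σa) (f σb) :=
            ⟨o, lt_of_lt_of_le hσa (le_pr hD0 σa ⟨rfl, hCa⟩),
                lt_of_lt_of_le hσb (le_pr hD0 σb ⟨rfl, hCb⟩)⟩
          have hbin : f σb ∈ R (n + 1) := by
            rw [hRs n, Finset.mem_union]
            right
            rw [Finset.mem_filter]
            exact ⟨Finset.mem_univ _, f σa, Finset.mem_coe.mp hfa, Or.inl hamb⟩
          have hss : R n ⊂ R (n + 1) :=
            (Finset.ssubset_iff_of_subset (hmono n)).mpr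
              ⟨f σb, hbin, fun hmem => hfb (Finset.mem_coe.mpr hmem)⟩
          have := Finset.card_lt_card hss
          omega
  have huniv : R (k - 1) = Finset.univ := by
    rcases hgrow (k - 1) with h | h
    · exact h
    · apply Finset.eq_univ_of_card
      have hle := Finset.card_le_univ (R (k - 1))
      rw [← hk] at hle ⊢
      omega
  have hall : ∀ c : Ψ, |L i - L c| ≤ 4 * ((k : ℝ) - 1) * ε := by
    intro c
    have := hRb (k - 1) c (huniv ▸ Finset.mem_univ c)
    have hcast : ((k - 1 : ℕ) : ℝ) = (k : ℝ) - 1 := by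
      rw [Nat.cast_sub hk1]; norm_num
    rwa [hcast] at this
  -- sum argument: find classes where each group dominates
  have hm : ∃ m : Ψ, cpr D (fun σ => f σ = m) (fun σ => g σ = Y) ≤
      cpr D (fun σ => f σ = m) (fun σ => g σ = X) := by
    by_contra hc
    push_neg at hc
    have := Finset.sum_lt_sum_of_nonempty Finset.univ_nonempty (fun c _ => hc c)
    rw [hsum X, hsum Y] at this
    exact lt_irrefl (1 : ℝ) this
  have hm' : ∃ m : Ψ, cpr D (fun σ => f σ = m) (fun σ => g σ = X) ≤
      cpr D (fun σ => f σ = m) (fun σ => g σ = Y) := by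
    by_contra hc
    push_neg at hc
    have := Finset.sum_lt_sum_of_nonempty Finset.univ_nonempty (fun c _ => hc c)
    rw [hsum X, hsum Y] at this
    exact lt_irrefl (1 : ℝ) this
  obtain ⟨m, hmle⟩ := hm
  obtain ⟨m', hmle'⟩ := hm'
  have hLm : 0 ≤ L m := by
    rw [hL]
    simp only
    have := Real.log_le_log (hbpos m Y) hmle
    linarith
  have hLm' : L m' ≤ 0 := by
    rw [hL]
    simp only
    have := Real.log_le_log (hbpos m' X) hmle'
    linarith
  have hfinal : |L i| ≤ 4 * ((k : ℝ) - 1) * ε := by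
    have h1 := abs_le.mp (hall m)
    have h2 := abs_le.mp (hall m')
    rw [abs_le]
    constructor <;> linarith [h1.1, h1.2, h2.1, h2.2]
  exact mdist_le_intro (hbpos i X) (hbpos i Y) hfinal
end

section
/- If a context P = (D, f, g, O) is ε-trivial via a partition Ψ_1,...,Ψ_m, then the classifier C that outputs the index i with f(σ) ∈ Ψ_i (computable from O(σ) by disjointness of supports) satisfies ε-predictive parity with respect to P: for all groups X,Y, indices i, and classes c, μ(Pr[f(σ_X)=c | C(O(σ_X))=i], Pr[f(σ_Y)=c | C(O(σ_Y))=i]) ≤ ε. -/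
open scoped Classical
open Finset

lemma pr_congr_s14 {S : Type} [Fintype S] (D : S → ℝ) (hD : ∀ σ, 0 ≤ D σ)
    (A B : S → Prop) (h : ∀ σ, 0 < D σ → (A σ ↔ B σ)) : pr D A = pr D B := by
  unfold pr
  apply Finset.sum_congr rfl
  intro σ _
  rcases eq_or_lt_of_le (hD σ) with h0 | h0
  · simp [← h0]
  · simp [h σ h0]

theorem trivial_implies_predictive_parity {S Ψ G Θ : Type} [Fintype S]
    (D : S → ℝ) (hD : IsProb D) (f : S → Ψ) (g : S → G) (O : S → Θ)
    (ε : ℝ) (m : ℕ) (P : Ψ → Fin m)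
    (htriv1 : ∀ (i : Fin m) (c : Ψ), P c = i → ∀ X Y : G,
        mdist (cpr D (fun σ => f σ = c) (fun σ => P (f σ) = i ∧ g σ = X))
              (cpr D (fun σ => f σ = c) (fun σ => P (f σ) = i ∧ g σ = Y))
          ≤ ENNReal.ofReal ε)
    (htriv2 : ∀ σ σ', 0 < D σ → 0 < D σ' → P (f σ) ≠ P (f σ') → O σ ≠ O σ')
    (C : Θ → Fin m) (hC : ∀ σ, 0 < D σ → C (O σ) = P (f σ)) :
    ∀ (X Y : G) (i : Fin m) (c : Ψ),
      mdist (cpr D (fun σ => f σ = c) (fun σ => C (O σ) = i ∧ g σ = X))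
            (cpr D (fun σ => f σ = c) (fun σ => C (O σ) = i ∧ g σ = Y))
        ≤ ENNReal.ofReal ε := by
  intro X Y i c
  have key : ∀ Z : G,
      cpr D (fun σ => f σ = c) (fun σ => C (O σ) = i ∧ g σ = Z)
        = cpr D (fun σ => f σ = c) (fun σ => P (f σ) = i ∧ g σ = Z) := by
    intro Z
    unfold cpr
    have h1 : pr D (fun σ => f σ = c ∧ C (O σ) = i ∧ g σ = Z)
        = pr D (fun σ => f σ = c ∧ P (f σ) = i ∧ g σ = Z) :=
      pr_congr_s14 D hD.1 _ _ (fun σ hσ => by simp [hC σ hσ])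
    have h2 : pr D (fun σ => C (O σ) = i ∧ g σ = Z)
        = pr D (fun σ => P (f σ) = i ∧ g σ = Z) :=
      pr_congr_s14 D hD.1 _ _ (fun σ hσ => by simp [hC σ hσ])
    simp only [h1, h2]
  rw [key X, key Y]
  by_cases hPc : P c = i
  · exact htriv1 i c hPc X Y
  · have hz : ∀ Z : G,
        cpr D (fun σ => f σ = c) (fun σ => P (f σ) = i ∧ g σ = Z) = 0 := by
      intro Z
      unfold cpr
      have : pr D (fun σ => f σ = c ∧ P (f σ) = i ∧ g σ = Z) = 0 := by
        unfold pr
        apply Finset.sum_eq_zero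
        intro σ _
        rw [if_neg]
        rintro ⟨hfc, hi, -⟩
        exact hPc (hfc ▸ hi)
      rw [this, zero_div]
    rw [hz X, hz Y]
    simp [mdist]
end
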